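/- Let H be a Hilbert space and (f_i) a sequence satisfying the lower frame condition whose analysis operator U (with domain D(U) = {f : (⟨f, fᵢ⟩) ∈ ℓ²}) is densely defined. Then there exists a Bessel sequence (g_i) in H such that whenever f ∈ H and the series Σᵢ ⟨f, gᵢ⟩ fᵢ converges in H, its sum equals f. -/

import Mathlib

open scoped RealInnerProductSpace

noncomputable section FrameAux

open scoped ENNReal

namespace FrameAux

variable {H : Type*} [NormedAddCommGroup H] [InnerProductSpace ℝ H] [CompleteSpace H]

abbrev E2 : Type := lp (fun _ : ℕ => ℝ) 2

lemma rpow_norm_eq_sq (x : ℝ) : ‖x‖ ^ ((2:ℝ≥0∞).toReal) = x ^ 2 := by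
  rw [ENNReal.toReal_ofNat, show ((2:ℝ)) = ((2:ℕ):ℝ) by norm_num, Real.rpow_natCast,
    Real.norm_eq_abs, sq_abs]

/-- The domain of the analysis operator, as a submodule. -/
def Dsub (F : ℕ → H) : Submodule ℝ H where
  carrier := {f : H | Summable (fun i => ⟪f, F i⟫ ^ 2)}
  zero_mem' := by simp [summable_zero]
  add_mem' := by
    intro a b ha hb
    refine Summable.of_nonneg_of_le (fun i => sq_nonneg _) (fun i => ?_)
      (((ha.mul_left 2).add (hb.mul_left 2)))
    simp only [inner_add_left]
    nlinarith [sq_nonneg (⟪a, F i⟫ - ⟪b, F i⟫)]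
  smul_mem' := by
    intro c a ha
    refine (ha.mul_left (c ^ 2)).congr fun i => ?_
    simp only [inner_smul_left, RCLike.inner_apply, conj_trivial]
    ring

lemma memℓp_of_mem {F : ℕ → H} {f : H} (hf : f ∈ Dsub F) :
    Memℓp (fun i => ⟪f, F i⟫) 2 := by
  apply memℓp_gen
  exact hf.congr fun i => (rpow_norm_eq_sq _).symm

/-- The analysis operator. -/
def Uop (F : ℕ → H) : Dsub F →ₗ[ℝ] E2 where
  toFun f := ⟨fun i => ⟪(f : H), F i⟫, memℓp_of_mem f.2⟩
  map_add' a b := by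
    ext i
    exact inner_add_left _ _ _
  map_smul' c a := by
    ext i
    exact inner_smul_left _ _ _

@[simp] lemma Uop_apply (F : ℕ → H) (f : Dsub F) (i : ℕ) :
    (Uop F f : ℕ → ℝ) i = ⟪(f : H), F i⟫ := rfl

lemma norm_Uop_sq (F : ℕ → H) (f : Dsub F) :
    ‖Uop F f‖ ^ 2 = ∑' i, ⟪(f : H), F i⟫ ^ 2 := by
  rw [← real_inner_self_eq_norm_sq, lp.inner_eq_tsum]
  congr 1
  ext i
  simp [RCLike.inner_apply, sq]

end FrameAux

end FrameAux

set_option maxHeartbeats 1600000 in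
open FrameAux in
/-- If `(fᵢ)` satisfies the lower frame condition and its analysis operator is densely
defined, then there is a Bessel sequence `(gᵢ)` such that whenever `Σᵢ ⟨f, gᵢ⟩ fᵢ`
converges, its sum equals `f`. -/
theorem stmt_19 (H : Type*) [NormedAddCommGroup H] [InnerProductSpace ℝ H] [CompleteSpace H]
    (F : ℕ → H) (A : ℝ) (hA : 0 < A)
    (hlow : ∀ f : H, Summable (fun i => ⟪f, F i⟫ ^ 2) → A * ‖f‖ ^ 2 ≤ ∑' i, ⟪f, F i⟫ ^ 2)
    (hdense : Dense {f : H | Summable (fun i => ⟪f, F i⟫ ^ 2)}) :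
    ∃ (g : ℕ → H) (B : ℝ),
      (∀ f : H, Summable (fun i => ⟪f, g i⟫ ^ 2) ∧ ∑' i, ⟪f, g i⟫ ^ 2 ≤ B * ‖f‖ ^ 2) ∧
      ∀ f s : H, Filter.Tendsto (fun n => ∑ i ∈ Finset.range n, ⟪f, g i⟫ • F i)
        Filter.atTop (nhds s) → s = f := by
  classical
  -- the analysis operator
  set U : Dsub F →ₗ[ℝ] E2 := Uop F with hU
  -- lower bound for U
  have hlowU : ∀ f : Dsub F, A * ‖(f : H)‖ ^ 2 ≤ ‖U f‖ ^ 2 := by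
    intro f
    rw [norm_Uop_sq]
    exact hlow _ f.2
  -- injectivity
  have hinj : Function.Injective U := by
    intro a b hab
    have h0 : U (a - b) = 0 := by rw [map_sub, hab, sub_self]
    have := hlowU (a - b)
    rw [h0, norm_zero] at this
    have hz : ‖((a - b : Dsub F) : H)‖ ^ 2 ≤ 0 := by nlinarith
    have : ((a - b : Dsub F) : H) = 0 := by
      have := sq_nonneg ‖((a - b : Dsub F) : H)‖
      have : ‖((a - b : Dsub F) : H)‖ = 0 := by nlinarith
      simpa using this
    have : (a - b : Dsub F) = 0 := Subtype.ext (by simpa using this)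
    exact sub_eq_zero.mp this
  set R : Submodule ℝ E2 := LinearMap.range U with hR
  set eqv : Dsub F ≃ₗ[ℝ] R := LinearEquiv.ofInjective U hinj with heqv
  set V₀ : R →ₗ[ℝ] H := (Dsub F).subtype ∘ₗ (eqv.symm : R →ₗ[ℝ] Dsub F) with hV₀
  have hV₀U : ∀ f : Dsub F, V₀ (eqv f) = (f : H) := by
    intro f
    simp [hV₀]
  have hV₀bound : ∀ c : R, ‖V₀ c‖ ≤ (Real.sqrt A)⁻¹ * ‖c‖ := by
    intro c
    have hx : eqv (eqv.symm c) = c := eqv.apply_symm_apply c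
    set x : Dsub F := eqv.symm c with hxdef
    have hUc : U x = (c : E2) := by
      have : ((eqv x : R) : E2) = U x := rfl
      rw [← this, hx]
    have h1 : A * ‖(x : H)‖ ^ 2 ≤ ‖(c : E2)‖ ^ 2 := by
      have := hlowU x
      rwa [hUc] at this
    have hVc : V₀ c = (x : H) := by simp [hV₀, hxdef]
    rw [hVc]
    have hs : (0:ℝ) < Real.sqrt A := Real.sqrt_pos.mpr hA
    have key : Real.sqrt A * ‖(x : H)‖ ≤ ‖(c : E2)‖ := by
      have e1 : (Real.sqrt A * ‖(x : H)‖) ^ 2 = A * ‖(x : H)‖ ^ 2 := by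
        rw [mul_pow, Real.sq_sqrt hA.le]
      calc Real.sqrt A * ‖(x : H)‖
          = Real.sqrt ((Real.sqrt A * ‖(x : H)‖) ^ 2) :=
            (Real.sqrt_sq (by positivity)).symm
        _ ≤ Real.sqrt (‖(c : E2)‖ ^ 2) := Real.sqrt_le_sqrt (by rw [e1]; exact h1)
        _ = ‖(c : E2)‖ := Real.sqrt_sq (norm_nonneg _)
    rw [inv_mul_eq_div, le_div_iff₀ hs, mul_comm]
    exact key
  -- the bounded inverse on the range
  set V : R →L[ℝ] H := V₀.mkContinuous ((Real.sqrt A)⁻¹) hV₀bound with hV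
  set K : Submodule ℝ E2 := R.topologicalClosure with hK
  haveI : CompleteSpace K := R.isClosed_topologicalClosure.completeSpace_coe
  -- the inclusion of R into K
  set ι : R →L[ℝ] K :=
    (Submodule.inclusion R.le_topologicalClosure).mkContinuous 1
      (fun x => by simp [Submodule.inclusion]) with hι
  have hιcoe : ∀ x : R, ((ι x : K) : E2) = (x : E2) := fun x => rfl
  have hιnorm : ∀ x : R, ‖ι x‖ = ‖x‖ := fun x => rfl
  have h_e : IsUniformInducing ι :=
    (AddMonoidHomClass.isometry_of_norm ι hιnorm).isUniformInducing
  have h_dense : DenseRange ι := by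
    intro y
    rw [closure_subtype]
    have himg : Subtype.val '' Set.range ι = (R : Set E2) := by
      ext z
      constructor
      · rintro ⟨w, ⟨x, rfl⟩, rfl⟩
        simpa [hιcoe] using x.2
      · intro hz
        exact ⟨ι ⟨z, hz⟩, ⟨⟨z, hz⟩, rfl⟩, hιcoe _⟩
    rw [himg]
    exact Submodule.topologicalClosure_coe R ▸ y.2
  -- the extension of V to K
  set Vb : K →L[ℝ] H := V.extend ι with hVb
  have hVbι : ∀ x : R, Vb (ι x) = V x := fun x =>
    ContinuousLinearMap.extend_eq V h_dense h_e x
  -- the adjoint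
  set T : H →L[ℝ] K := ContinuousLinearMap.adjoint Vb with hT
  have hTinner : ∀ (f : H) (x : K), ⟪T f, x⟫ = ⟪f, Vb x⟫ := fun f x =>
    Vb.adjoint_inner_left x f ▸ rfl
  -- the dual sequence
  set g : ℕ → H := fun i => Vb (K.orthogonalProjection (lp.single 2 i 1)) with hgdef
  have hg : ∀ (f : H) (i : ℕ), ⟪f, g i⟫ = ((T f : K) : E2) i := by
    intro f i
    have e1 : ⟪f, g i⟫ = ⟪T f, K.orthogonalProjection (lp.single 2 i 1)⟫ :=
      (hTinner f _).symm
    have e2 : ⟪T f, K.orthogonalProjection (lp.single 2 i 1)⟫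
        = ⟪((T f : K) : E2), ((K.orthogonalProjection (lp.single 2 i 1) : K) : E2)⟫ := rfl
    have e3 : ⟪((T f : K) : E2), ((K.orthogonalProjection (lp.single 2 i 1) : K) : E2)⟫
        = ⟪((T f : K) : E2), lp.single 2 i 1⟫ := by
      have horth : ⟪((T f : K) : E2),
          lp.single 2 i 1 - ((K.orthogonalProjection (lp.single 2 i 1) : K) : E2)⟫ = 0 := by
        rw [real_inner_comm]
        exact Submodule.starProjection_inner_eq_zero (K := K) (lp.single 2 i 1) _ (T f).2
      rw [inner_sub_right] at horth
      linarith
    have e4 : ⟪((T f : K) : E2), lp.single 2 i 1⟫ = ((T f : K) : E2) i := by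
      rw [lp.inner_single_right]
      simp [RCLike.inner_apply]
    rw [e1, e2, e3, e4]
  refine ⟨g, ‖T‖ ^ 2, ?_, ?_⟩
  · -- Bessel bounds
    intro f
    have hsum : HasSum (fun i => ⟪f, g i⟫ ^ 2) ⟪((T f : K) : E2), ((T f : K) : E2)⟫ := by
      have := lp.hasSum_inner (𝕜 := ℝ) ((T f : K) : E2) ((T f : K) : E2)
      refine this.congr_fun fun i => ?_
      simp [RCLike.inner_apply, hg f i, sq]
    refine ⟨hsum.summable, ?_⟩
    rw [hsum.tsum_eq]
    have e5 : ⟪((T f : K) : E2), ((T f : K) : E2)⟫ = ‖T f‖ ^ 2 := by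
      rw [real_inner_self_eq_norm_sq]
      rfl
    rw [e5]
    have := (T).le_opNorm f
    nlinarith [norm_nonneg (T f), norm_nonneg f, norm_nonneg T]
  · -- reconstruction
    intro f s htend
    have hsf : ∀ h ∈ {f : H | Summable (fun i => ⟪f, F i⟫ ^ 2)}, ⟪s - f, h⟫ = 0 := by
      intro h hh
      have hhD : h ∈ Dsub F := hh
      set hD : Dsub F := ⟨h, hhD⟩ with hhDdef
      set xR : R := ⟨U hD, LinearMap.mem_range_self U hD⟩ with hxRdef
      -- limit 1 : inner products of partial sums
      have t1 : Filter.Tendsto (fun n => ∑ i ∈ Finset.range n, ⟪f, g i⟫ * ⟪h, F i⟫)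
          Filter.atTop (nhds ⟪s, h⟫) := by
        have := Filter.Tendsto.inner (𝕜 := ℝ) htend (tendsto_const_nhds (x := h))
        refine this.congr fun n => ?_
        rw [sum_inner]
        refine Finset.sum_congr rfl fun i _ => ?_
        rw [real_inner_smul_left, real_inner_comm (F i) h]
      -- limit 2 : the ℓ² inner product
      have t2 : Filter.Tendsto (fun n => ∑ i ∈ Finset.range n, ⟪f, g i⟫ * ⟪h, F i⟫)
          Filter.atTop (nhds ⟪((T f : K) : E2), (U hD : E2)⟫) := by
        have h2 := lp.hasSum_inner (𝕜 := ℝ) ((T f : K) : E2) (U hD : E2)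
        have h3 : HasSum (fun i => ⟪f, g i⟫ * ⟪h, F i⟫)
            ⟪((T f : K) : E2), (U hD : E2)⟫ := by
          refine h2.congr_fun fun i => ?_
          rw [RCLike.inner_apply, conj_trivial, hg f i]
          exact mul_comm _ _
        exact h3.tendsto_sum_nat
      have huniq : ⟪s, h⟫ = ⟪((T f : K) : E2), (U hD : E2)⟫ := tendsto_nhds_unique t1 t2
      -- identify the ℓ² inner product with ⟪f, h⟫
      have hxι : ((ι xR : K) : E2) = (U hD : E2) := hιcoe xR
      have i1 : ⟪((T f : K) : E2), (U hD : E2)⟫ = ⟪T f, ι xR⟫ := by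
        rw [← hxι]; rfl
      have i2 : ⟪T f, ι xR⟫ = ⟪f, Vb (ι xR)⟫ := hTinner f _
      have i3 : Vb (ι xR) = V xR := hVbι xR
      have i4 : V xR = V₀ xR := rfl
      have i5 : V₀ xR = h := by
        have hx : eqv hD = xR := Subtype.ext rfl
        have : eqv.symm xR = hD := by rw [← hx, eqv.symm_apply_apply]
        simp [hV₀, this]; rfl
      rw [inner_sub_left, huniq, i1, i2, i3, i4, i5, sub_self]
    have hall : ∀ h : H, ⟪s - f, h⟫ = 0 := by
      have hclosed : IsClosed {h : H | ⟪s - f, h⟫ = 0} :=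
        isClosed_eq (continuous_const.inner continuous_id) continuous_const
      intro h
      have hsub : {f : H | Summable (fun i => ⟪f, F i⟫ ^ 2)} ⊆ {h : H | ⟪s - f, h⟫ = 0} :=
        fun x hx => hsf x hx
      have : Dense {h : H | ⟪s - f, h⟫ = 0} := hdense.mono hsub
      have heq : Set.univ = {h : H | ⟪s - f, h⟫ = 0} := by
        rw [← hclosed.closure_eq, ← this.closure_eq]
      have hmem : h ∈ Set.univ := Set.mem_univ h
      rw [heq] at hmem
      exact hmem
    have : s - f = 0 := by
      have := hall (s - f)
      exact inner_self_eq_zero.mp this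
    exact sub_eq_zero.mp this
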